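/- Assume b²/(27c) < a < b²/(24c) (so that b² − 24ac > 0). Then: (i) F_b(Q) > 0 for every nonzero Q ∈ 𝒬, so Q = 0 is the strict global minimizer of F_b on 𝒬; (ii) for each unit vector n ∈ ℝ³, s₊ (n nᵀ − I/3) is a local minimizer of F_b on 𝒬 with F_b(s₊ (n nᵀ − I/3)) > 0; (iii) for any unit vector n, s₋ (n nᵀ − I/3) is not a local minimizer of F_b on 𝒬. -/

import Mathlib

open Real

noncomputable section

abbrev Mat3 : Type := Matrix (Fin 3) (Fin 3) ℝ

/-- The space 𝒬 of real symmetric traceless 3×3 matrices. -/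
def QSet : Set Mat3 := {Q | Q.IsSymm ∧ Q.trace = 0}

/-- The Landau–de Gennes bulk energy
`F_b(Q) = (a/2) tr(Q²) − (b/3) tr(Q³) + (c/4) (tr(Q²))²`. -/
noncomputable def Fb (a b c : ℝ) (Q : Mat3) : ℝ :=
  a / 2 * (Q * Q).trace - b / 3 * (Q * Q * Q).trace + c / 4 * ((Q * Q).trace) ^ 2

/-- The uniaxial tensor `s (n nᵀ − I/3)`. -/
noncomputable def uniQ (s : ℝ) (n : Fin 3 → ℝ) : Mat3 :=
  s • (Matrix.vecMulVec n n - (1 / 3 : ℝ) • (1 : Mat3))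

/-- `s₊ = (b + √(b² − 24ac))/(4c)`. -/
noncomputable def splus (a b c : ℝ) : ℝ := (b + Real.sqrt (b ^ 2 - 24 * a * c)) / (4 * c)

/-- `s₋ = (b − √(b² − 24ac))/(4c)`. -/
noncomputable def sminus (a b c : ℝ) : ℝ := (b - Real.sqrt (b ^ 2 - 24 * a * c)) / (4 * c)

/-- scalar energy along uniaxial states -/
noncomputable def Gf (a b c s : ℝ) : ℝ := a/3*s^2 - 2*b/27*s^3 + c/9*s^4

lemma isHermitian_of_isSymm (Q : Mat3) (h : Q.IsSymm) : Q.IsHermitian := by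
  ext i j
  rw [Matrix.conjTranspose_apply, star_trivial]
  exact h.apply i j

lemma diag_repr (Q : Mat3) (hQ : Q.IsHermitian) :
    ∃ (U : Mat3) (μ : Fin 3 → ℝ), star U * U = 1 ∧ Q = U * Matrix.diagonal μ * star U := by
  refine ⟨hQ.eigenvectorUnitary, hQ.eigenvalues,
    Matrix.mem_unitaryGroup_iff'.mp hQ.eigenvectorUnitary.2, ?_⟩
  have h1 := hQ.spectral_theorem
  have hcoe : (RCLike.ofReal ∘ hQ.eigenvalues : Fin 3 → ℝ) = hQ.eigenvalues := by
    funext i; simp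
  rw [hcoe] at h1
  exact h1

lemma trace_pow_repr (Q : Mat3) (hQ : Q.IsHermitian) :
    ∃ μ : Fin 3 → ℝ, Q.trace = ∑ i, μ i ∧ (Q*Q).trace = ∑ i, μ i ^ 2 ∧
      (Q*Q*Q).trace = ∑ i, μ i ^ 3 := by
  obtain ⟨U, μ, hU, h1⟩ := diag_repr Q hQ
  have key : ∀ A B : Mat3, (U * A * star U) * (U * B * star U) = U * (A * B) * star U := by
    intro A B
    calc (U * A * star U) * (U * B * star U)
        = U * A * ((star U * U) * (B * star U)) := by simp only [Matrix.mul_assoc]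
      _ = U * (A * B) * star U := by rw [hU, one_mul]; simp only [Matrix.mul_assoc]
  have htr : ∀ A : Mat3, (U * A * star U).trace = A.trace := by
    intro A
    rw [Matrix.trace_mul_cycle, hU, Matrix.one_mul]
  refine ⟨μ, ?_, ?_, ?_⟩
  · rw [h1, htr, Matrix.trace_diagonal]
  · rw [h1, key, Matrix.diagonal_mul_diagonal, htr, Matrix.trace_diagonal]
    exact Finset.sum_congr rfl fun i _ => by ring
  · rw [h1, key, key, Matrix.diagonal_mul_diagonal, Matrix.diagonal_mul_diagonal, htr,
      Matrix.trace_diagonal]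
    exact Finset.sum_congr rfl fun i _ => by ring

lemma cube_trace_ineq (Q : Mat3) (hQ : Q.IsSymm) (ht : Q.trace = 0) :
    6 * ((Q*Q*Q).trace)^2 ≤ ((Q*Q).trace)^3 := by
  obtain ⟨μ, h0, h2, h3⟩ := trace_pow_repr Q (isHermitian_of_isSymm Q hQ)
  rw [Fin.sum_univ_three] at h0 h2 h3
  rw [h2, h3]
  rw [h0] at ht
  have hz : μ 2 = -μ 0 - μ 1 := by linarith
  rw [hz]
  nlinarith [sq_nonneg ((μ 0 - μ 1)*(2*μ 0 + μ 1)*(μ 0 + 2*μ 1))]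

lemma trace_sq_eq (Q : Mat3) (hQ : Q.IsSymm) :
    (Q*Q).trace = ∑ i, ∑ j, (Q i j)^2 := by
  rw [Matrix.trace]
  refine Finset.sum_congr rfl fun i _ => ?_
  rw [Matrix.diag_apply, Matrix.mul_apply]
  refine Finset.sum_congr rfl fun j _ => ?_
  rw [hQ.apply i j, pow_two]

lemma trace_sq_nonneg (Q : Mat3) (hQ : Q.IsSymm) : 0 ≤ (Q*Q).trace := by
  rw [trace_sq_eq Q hQ]
  exact Finset.sum_nonneg fun i _ => Finset.sum_nonneg fun j _ => sq_nonneg _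

lemma trace_sq_pos (Q : Mat3) (hQ : Q.IsSymm) (hne : Q ≠ 0) : 0 < (Q*Q).trace := by
  rcases lt_or_eq_of_le (trace_sq_nonneg Q hQ) with h | h
  · exact h
  · exfalso
    apply hne
    ext i j
    simp only [Matrix.zero_apply]
    by_contra hij
    have hterm : 0 < (Q i j)^2 := by positivity
    have hle : (Q i j)^2 ≤ ∑ i, ∑ j, (Q i j)^2 := by
      calc (Q i j)^2 ≤ ∑ j, (Q i j)^2 :=
            Finset.single_le_sum (fun k _ => sq_nonneg (Q i k)) (Finset.mem_univ j)
        _ ≤ ∑ i, ∑ j, (Q i j)^2 :=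
            Finset.single_le_sum (f := fun k => ∑ l, (Q k l)^2)
              (fun k _ => Finset.sum_nonneg fun l _ => sq_nonneg _) (Finset.mem_univ i)
    rw [← trace_sq_eq Q hQ, ← h] at hle
    linarith

/-- main lower bound: `Fb Q ≥ Gf (√(3/2 tr Q²))` on `QSet`. -/
lemma Fb_ge_Gf (a b c : ℝ) (hb : 0 < b) (Q : Mat3) (hQ : Q ∈ QSet) :
    Gf a b c (Real.sqrt (3/2 * (Q*Q).trace)) ≤ Fb a b c Q := by
  obtain ⟨hsym, htr⟩ := hQ
  set p : ℝ := (Q*Q).trace with hpdef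
  set q : ℝ := (Q*Q*Q).trace with hqdef
  have hp0 : 0 ≤ p := trace_sq_nonneg Q hsym
  set s : ℝ := Real.sqrt (3/2 * p) with hsdef
  have hs0 : 0 ≤ s := Real.sqrt_nonneg _
  have hs2 : s^2 = 3/2 * p := Real.sq_sqrt (by linarith)
  have hp : p = 2*s^2/3 := by rw [hs2]; ring
  have h6 : 6 * q^2 ≤ p^3 := cube_trace_ineq Q hsym htr
  rw [hp] at h6
  have ht : (0:ℝ) ≤ 2*s^3/9 := by positivity
  have hq2 : q^2 ≤ (2*s^3/9)^2 := by nlinarith [h6]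
  have hqle : q ≤ 2*s^3/9 := by
    by_cases hq : q ≤ 2*s^3/9
    · exact hq
    · push_neg at hq
      nlinarith [hq2, ht]
  have hFb : Fb a b c Q = a/2*p - b/3*q + c/4*p^2 := rfl
  rw [hFb, hp]
  unfold Gf
  nlinarith [mul_nonneg hb.le (sub_nonneg.mpr hqle)]

lemma smul_mul_smul' (x y : ℝ) (A B : Mat3) : (x • A) * (y • B) = (x*y) • (A*B) := by
  rw [smul_mul_assoc, mul_smul_comm, smul_smul]

lemma vecMulVec_mul_self (n : Fin 3 → ℝ) (hn : ∑ i, n i ^ 2 = 1) :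
    Matrix.vecMulVec n n * Matrix.vecMulVec n n = Matrix.vecMulVec n n := by
  ext i j
  simp only [Matrix.mul_apply, Matrix.vecMulVec_apply]
  have h : ∑ k, (n i * n k) * (n k * n j) = (n i * n j) * ∑ k, n k ^ 2 := by
    rw [Finset.mul_sum]; exact Finset.sum_congr rfl fun k _ => by ring
  rw [h, hn, mul_one]

lemma trace_vecMulVec (n : Fin 3 → ℝ) (hn : ∑ i, n i ^ 2 = 1) :
    (Matrix.vecMulVec n n).trace = 1 := by
  rw [Matrix.trace]
  have h : ∀ i, (Matrix.vecMulVec n n).diag i = n i ^ 2 := by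
    intro i; rw [Matrix.diag_apply, Matrix.vecMulVec_apply, pow_two]
  rw [Finset.sum_congr rfl fun i _ => h i, hn]

lemma uniQ_eq (s : ℝ) (n : Fin 3 → ℝ) :
    uniQ s n = s • Matrix.vecMulVec n n - (s/3) • (1 : Mat3) := by
  unfold uniQ
  rw [smul_sub, smul_smul, mul_one_div]

lemma uniQ_mul (s t : ℝ) (n : Fin 3 → ℝ) (hn : ∑ i, n i ^ 2 = 1) :
    uniQ s n * uniQ t n = ((s*t)/3) • Matrix.vecMulVec n n + ((s*t)/9) • (1 : Mat3) := by
  have hP := vecMulVec_mul_self n hn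
  rw [uniQ_eq, uniQ_eq, sub_mul, mul_sub, mul_sub, smul_mul_smul', smul_mul_smul',
    smul_mul_smul', smul_mul_smul', hP, mul_one, one_mul, mul_one]
  module

lemma uniQ_mem (s : ℝ) (n : Fin 3 → ℝ) (hn : ∑ i, n i ^ 2 = 1) : uniQ s n ∈ QSet := by
  constructor
  · apply Matrix.IsSymm.smul
    apply Matrix.IsSymm.sub
    · ext i j
      rw [Matrix.transpose_apply, Matrix.vecMulVec_apply, Matrix.vecMulVec_apply, mul_comm]
    · exact (Matrix.isSymm_one).smul _
  · show (s • (Matrix.vecMulVec n n - (1 / 3 : ℝ) • (1 : Mat3))).trace = 0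
    rw [Matrix.trace_smul, Matrix.trace_sub, Matrix.trace_smul, Matrix.trace_one,
      trace_vecMulVec n hn]
    simp only [smul_eq_mul, Fintype.card_fin]
    push_cast
    ring

lemma trace_uniQ_sq (s : ℝ) (n : Fin 3 → ℝ) (hn : ∑ i, n i ^ 2 = 1) :
    (uniQ s n * uniQ s n).trace = 2*s^2/3 := by
  rw [uniQ_mul s s n hn, Matrix.trace_add, Matrix.trace_smul, Matrix.trace_smul,
    Matrix.trace_one, trace_vecMulVec n hn]
  simp only [smul_eq_mul, Fintype.card_fin]
  push_cast
  ring

lemma trace_uniQ_cube (s : ℝ) (n : Fin 3 → ℝ) (hn : ∑ i, n i ^ 2 = 1) :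
    (uniQ s n * uniQ s n * uniQ s n).trace = 2*s^3/9 := by
  have hP := vecMulVec_mul_self n hn
  rw [uniQ_mul s s n hn]
  have h : (((s*s)/3) • Matrix.vecMulVec n n + ((s*s)/9) • (1 : Mat3)) * uniQ s n
      = (s^3/3) • Matrix.vecMulVec n n - (s^3/27) • (1 : Mat3) := by
    rw [uniQ_eq, add_mul, mul_sub, mul_sub, smul_mul_smul', smul_mul_smul',
      smul_mul_smul', smul_mul_smul', hP, mul_one, one_mul, mul_one]
    module
  rw [h, Matrix.trace_sub, Matrix.trace_smul, Matrix.trace_smul, Matrix.trace_one,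
    trace_vecMulVec n hn]
  simp only [smul_eq_mul, Fintype.card_fin]
  push_cast
  ring

lemma Fb_uniQ (a b c s : ℝ) (n : Fin 3 → ℝ) (hn : ∑ i, n i ^ 2 = 1) :
    Fb a b c (uniQ s n) = Gf a b c s := by
  unfold Fb Gf
  rw [trace_uniQ_sq s n hn, trace_uniQ_cube s n hn]
  ring

lemma Gf_diff (a b c s s0 : ℝ) (h0 : 2*c*s0^2 - b*s0 + 3*a = 0) :
    Gf a b c s - Gf a b c s0 =
      (s-s0)^2 * (3*c*s^2 + (6*c*s0-2*b)*s + (9*a-4*b*s0+9*c*s0^2)) / 27 := by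
  unfold Gf
  linear_combination (2*s0*(s-s0)/9) * h0

set_option maxHeartbeats 2000000 in
/-- For `b²/(27c) < a < b²/(24c)`: (i) `F_b(Q) > 0` for every nonzero `Q ∈ 𝒬`, so `Q = 0`
is the strict global minimizer; (ii) each `s₊ (n nᵀ − I/3)` is a local minimizer of `F_b`
on 𝒬 with strictly positive energy; (iii) no `s₋ (n nᵀ − I/3)` is a local minimizer of
`F_b` on 𝒬. -/
theorem stmt11 (a b c : ℝ) (hb : 0 < b) (hc : 0 < c)
    (ha1 : b ^ 2 / (27 * c) < a) (ha2 : a < b ^ 2 / (24 * c)) :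
    (∀ Q ∈ QSet, Q ≠ 0 → 0 < Fb a b c Q) ∧
    (∀ n : Fin 3 → ℝ, (∑ i, (n i) ^ 2 = 1) →
      IsLocalMinOn (Fb a b c) QSet (uniQ (splus a b c) n) ∧
      0 < Fb a b c (uniQ (splus a b c) n)) ∧
    (∀ n : Fin 3 → ℝ, (∑ i, (n i) ^ 2 = 1) →
      ¬ IsLocalMinOn (Fb a b c) QSet (uniQ (sminus a b c) n)) := by
  have ha0 : 0 < a := lt_trans (by positivity) ha1
  have h27 : b^2 < 27*a*c := by
    rw [div_lt_iff₀ (by positivity)] at ha1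
    nlinarith [ha1]
  have hD : 0 < b^2 - 24*a*c := by
    rw [lt_div_iff₀ (by positivity)] at ha2
    nlinarith [ha2]
  set d : ℝ := Real.sqrt (b^2 - 24*a*c) with hddef
  have hd2 : d^2 = b^2 - 24*a*c := Real.sq_sqrt hD.le
  have hdpos : 0 < d := Real.sqrt_pos.mpr hD
  have hdb : d < b := by
    nlinarith [hd2, hdpos, ha0, hc, hb]
  set sp : ℝ := splus a b c with hspdef
  set sm : ℝ := sminus a b c with hsmdef
  have hsp_eq : sp = (b + d)/(4*c) := by rw [hspdef]; unfold splus; rw [hddef]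
  have hsm_eq : sm = (b - d)/(4*c) := by rw [hsmdef]; unfold sminus; rw [hddef]
  have hsp_pos : 0 < sp := by rw [hsp_eq]; positivity
  have hsm_pos : 0 < sm := by rw [hsm_eq]; apply div_pos (by linarith) (by positivity)
  have hsp_root : 2*c*sp^2 - b*sp + 3*a = 0 := by
    rw [hsp_eq]
    field_simp
    nlinarith [hd2]
  have hsm_root : 2*c*sm^2 - b*sm + 3*a = 0 := by
    rw [hsm_eq]
    field_simp
    nlinarith [hd2]
  have hsp_R : 0 < b*sp - 6*a := by
    have : 4*c*(b*sp - 6*a) = d^2 + b*d := by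
      rw [hsp_eq, hd2]; field_simp; ring
    nlinarith [this, mul_pos hb hdpos, sq_nonneg d, hdpos]
  have hsm_R : b*sm - 6*a < 0 := by
    have : 4*c*(b*sm - 6*a) = d^2 - b*d := by
      rw [hsm_eq, hd2]; field_simp; ring
    nlinarith [this, mul_pos hdpos (sub_pos.mpr hdb)]
  -- positivity of Gf away from 0
  have hGpos : ∀ s : ℝ, s ≠ 0 → 0 < Gf a b c s := by
    intro s hs
    have hq : 0 < 3*c*s^2 - 2*b*s + 9*a := by nlinarith [sq_nonneg (3*c*s - b), h27, hc]
    have hs2 : 0 < s^2 := by positivity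
    have := mul_pos hs2 hq
    unfold Gf
    nlinarith [this]
  -- continuity of s(Q)
  have hcont : Continuous (fun Q : Mat3 => Real.sqrt (3/2 * (Q*Q).trace)) := by
    apply Real.continuous_sqrt.comp
    exact continuous_const.mul ((continuous_id.matrix_mul continuous_id).matrix_trace)
  refine ⟨?_, ?_, ?_⟩
  · -- part (i)
    intro Q hQ hne
    have hp := trace_sq_pos Q hQ.1 hne
    have hs : Real.sqrt (3/2 * (Q*Q).trace) ≠ 0 := by
      have : 0 < Real.sqrt (3/2 * (Q*Q).trace) := Real.sqrt_pos.mpr (by linarith)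
      exact this.ne'
    have := Fb_ge_Gf a b c hb Q hQ
    have := hGpos _ hs
    linarith
  · -- part (ii)
    intro n hn
    have hmem := uniQ_mem sp n hn
    have hval : Fb a b c (uniQ sp n) = Gf a b c sp := Fb_uniQ a b c sp n hn
    constructor
    · -- local min
      have hsQ0 : Real.sqrt (3/2 * ((uniQ sp n) * (uniQ sp n)).trace) = sp := by
        rw [trace_uniQ_sq sp n hn]
        rw [show (3:ℝ)/2 * (2*sp^2/3) = sp^2 by ring]
        exact Real.sqrt_sq hsp_pos.le
      set Rp : ℝ → ℝ := fun s => 3*c*s^2 + (6*c*sp-2*b)*s + (9*a-4*b*sp+9*c*sp^2) with hRpdef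
      have hRsp : 0 < Rp sp := by
        show 0 < 3*c*sp^2 + (6*c*sp-2*b)*sp + (9*a-4*b*sp+9*c*sp^2)
        nlinarith [hsp_root, hsp_R]
      have hRcont : Continuous Rp := by
        apply Continuous.add
        apply Continuous.add
        · exact continuous_const.mul (continuous_pow 2)
        · exact continuous_const.mul continuous_id
        · exact continuous_const
      have htend : Filter.Tendsto (fun Q : Mat3 => Rp (Real.sqrt (3/2 * (Q*Q).trace)))
          (nhds (uniQ sp n)) (nhds (Rp sp)) := by
        have := (hRcont.comp hcont).tendsto (uniQ sp n)
        simpa [hsQ0, Function.comp_def] using this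
      have hev : ∀ᶠ Q in nhds (uniQ sp n), 0 < Rp (Real.sqrt (3/2 * (Q*Q).trace)) :=
        htend.eventually (eventually_gt_nhds hRsp)
      show ∀ᶠ Q in nhdsWithin (uniQ sp n) QSet, Fb a b c (uniQ sp n) ≤ Fb a b c Q
      filter_upwards [hev.filter_mono nhdsWithin_le_nhds, eventually_mem_nhdsWithin]
        with Q hR hQmem
      have h1 : Gf a b c (Real.sqrt (3/2 * (Q*Q).trace)) ≤ Fb a b c Q :=
        Fb_ge_Gf a b c hb Q hQmem
      set sq : ℝ := Real.sqrt (3/2 * (Q*Q).trace) with hsq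
      have h2 : Gf a b c sp ≤ Gf a b c sq := by
        have hdiff := Gf_diff a b c sq sp hsp_root
        have hRq : Rp sq = 3*c*sq^2 + (6*c*sp-2*b)*sq + (9*a-4*b*sp+9*c*sp^2) := rfl
        rw [hRq] at hR
        nlinarith [sq_nonneg (sq - sp), hR, hdiff]
      rw [hval]
      linarith
    · rw [hval]
      exact hGpos sp hsp_pos.ne'
  · -- part (iii)
    intro n hn hmin
    have hcurve : Continuous (fun t : ℝ => uniQ t n) := by
      unfold uniQ
      exact continuous_id.smul continuous_const
    have htend : Filter.Tendsto (fun t : ℝ => uniQ t n) (nhds sm)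
        (nhdsWithin (uniQ sm n) QSet) := by
      apply tendsto_nhdsWithin_of_tendsto_nhds_of_eventually_within
      · exact hcurve.tendsto sm
      · exact Filter.Eventually.of_forall fun t => uniQ_mem t n hn
    have hev : ∀ᶠ t in nhds sm, Fb a b c (uniQ sm n) ≤ Fb a b c (uniQ t n) :=
      htend.eventually hmin
    have hev' : ∀ᶠ t in nhds sm, Gf a b c sm ≤ Gf a b c t := by
      filter_upwards [hev] with t ht
      rwa [Fb_uniQ a b c sm n hn, Fb_uniQ a b c t n hn] at ht
    set Rm : ℝ → ℝ := fun s => 3*c*s^2 + (6*c*sm-2*b)*s + (9*a-4*b*sm+9*c*sm^2) with hRmdef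
    have hRsm : Rm sm < 0 := by
      show 3*c*sm^2 + (6*c*sm-2*b)*sm + (9*a-4*b*sm+9*c*sm^2) < 0
      nlinarith [hsm_root, hsm_R]
    have hRcont : Continuous Rm := by
      apply Continuous.add
      apply Continuous.add
      · exact continuous_const.mul (continuous_pow 2)
      · exact continuous_const.mul continuous_id
      · exact continuous_const
    have hevR : ∀ᶠ t in nhds sm, Rm t < 0 :=
      (hRcont.tendsto sm).eventually (eventually_lt_nhds hRsm)
    have hcomb : ∀ᶠ t in nhdsWithin sm {sm}ᶜ,
        (Gf a b c sm ≤ Gf a b c t ∧ Rm t < 0) ∧ t ≠ sm := by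
      refine Filter.Eventually.and ?_ ?_
      · exact ((hev'.and hevR).filter_mono nhdsWithin_le_nhds)
      · exact eventually_mem_nhdsWithin
    obtain ⟨t, ⟨hle, hRt⟩, htne⟩ := hcomb.exists
    have hdiff := Gf_diff a b c t sm hsm_root
    have hRq : Rm t = 3*c*t^2 + (6*c*sm-2*b)*t + (9*a-4*b*sm+9*c*sm^2) := rfl
    rw [hRq] at hRt
    have hsqpos : 0 < (t - sm)^2 := by
      have : t - sm ≠ 0 := sub_ne_zero.mpr htne
      positivity
    nlinarith [hdiff, hle, mul_pos hsqpos (neg_pos.mpr hRt)]
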